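/- Let f have coordinate-wise Lipschitz gradient with constant L_i along e_i and let y ∈ [l,u]. If 0 < ν ≤ 2|∇_i f(y)|/L_i, then for every α with 0 < α ≤ ν such that y + α·sign(∇_i f(y)) e_i ∈ [l,u] and every γ > 0, f(y + α·sign(∇_i f(y)) e_i) > f(y) − γα². (Hence no sufficient decrease is possible along the ascent direction sign(∇_i f(y)) e_i with stepsizes at most ν.) -/

import Mathlib

/-- The box `[l, u]` in `ℝⁿ`. -/
def Box {n : ℕ} (l u : EuclideanSpace ℝ (Fin n)) : Set (EuclideanSpace ℝ (Fin n)) :=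
  {y | ∀ j, l j ≤ y j ∧ y j ≤ u j}

/-- One-sided descent-lemma bound for a real function with Lipschitz-type
derivative control on the segment `uIcc 0 t`. -/
lemma descent_aux (φ φ' : ℝ → ℝ) (t c L : ℝ) (hL : 0 ≤ L)
    (hd : ∀ τ ∈ Set.uIcc 0 t, HasDerivAt φ (φ' τ) τ)
    (hb : ∀ τ ∈ Set.uIcc 0 t, |φ' τ - c| ≤ L * |τ|) :
    φ 0 + c * t - L / 2 * t ^ 2 ≤ φ t := by
  set χ : ℝ → ℝ := fun τ => φ τ - c * τ + L / 2 * τ ^ 2 with hχ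
  have hχd : ∀ τ ∈ Set.uIcc 0 t, HasDerivAt χ (φ' τ - c + L * τ) τ := by
    intro τ hτ
    have h1 : HasDerivAt (fun x : ℝ => c * x) c τ := by
      simpa using (hasDerivAt_id τ).const_mul c
    have h2 : HasDerivAt (fun x : ℝ => L / 2 * x ^ 2) (L * τ) τ := by
      have := (hasDerivAt_pow 2 τ).const_mul (L / 2)
      exact this.congr_deriv (by ring)
    exact ((hd τ hτ).sub h1).add h2
  have hcont : ContinuousOn χ (Set.uIcc 0 t) := fun τ hτ =>
    (hχd τ hτ).continuousAt.continuousWithinAt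
  have hdiff : DifferentiableOn ℝ χ (interior (Set.uIcc 0 t)) := fun τ hτ =>
    ((hχd τ (interior_subset hτ)).differentiableAt).differentiableWithinAt
  have key : χ 0 ≤ χ t := by
    rcases le_or_gt 0 t with ht | ht
    · have huIcc : Set.uIcc 0 t = Set.Icc 0 t := Set.uIcc_of_le ht
      have hmono : MonotoneOn χ (Set.Icc 0 t) := by
        apply monotoneOn_of_deriv_nonneg (convex_Icc 0 t) (huIcc ▸ hcont)
          (huIcc ▸ hdiff)
        intro τ hτ
        rw [interior_Icc] at hτ
        have hτm : τ ∈ Set.uIcc 0 t := by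
          rw [huIcc]; exact ⟨le_of_lt hτ.1, le_of_lt hτ.2⟩
        rw [(hχd τ hτm).deriv]
        have hbb := hb τ hτm
        rw [abs_of_pos hτ.1] at hbb
        have := (abs_le.mp hbb).1
        linarith
      exact hmono (Set.left_mem_Icc.mpr ht) (Set.right_mem_Icc.mpr ht) ht
    · have huIcc : Set.uIcc 0 t = Set.Icc t 0 := Set.uIcc_of_ge ht.le
      have hanti : AntitoneOn χ (Set.Icc t 0) := by
        apply antitoneOn_of_deriv_nonpos (convex_Icc t 0) (huIcc ▸ hcont)
          (huIcc ▸ hdiff)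
        intro τ hτ
        rw [interior_Icc] at hτ
        have hτm : τ ∈ Set.uIcc 0 t := by
          rw [huIcc]; exact ⟨le_of_lt hτ.1, le_of_lt hτ.2⟩
        rw [(hχd τ hτm).deriv]
        have hbb := hb τ hτm
        rw [abs_of_neg hτ.2] at hbb
        have := (abs_le.mp hbb).2
        linarith
      exact hanti (Set.left_mem_Icc.mpr ht.le) (Set.right_mem_Icc.mpr ht.le) ht.le
  simp only [hχ] at key
  nlinarith [key]

theorem stmt19 {n : ℕ} (f : EuclideanSpace ℝ (Fin n) → ℝ)
    (g : EuclideanSpace ℝ (Fin n) → EuclideanSpace ℝ (Fin n))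
    (l u y : EuclideanSpace ℝ (Fin n)) (i : Fin n) (Li ν : ℝ)
    (hLi : 0 < Li)
    (hgrad : ∀ w ∈ Box l u, HasGradientAt f (g w) w)
    (hlip : ∀ w : EuclideanSpace ℝ (Fin n), ∀ t : ℝ, w ∈ Box l u →
      w + t • EuclideanSpace.single i (1:ℝ) ∈ Box l u →
      |g (w + t • EuclideanSpace.single i (1:ℝ)) i - g w i| ≤ Li * |t|)
    (hy : y ∈ Box l u) (hν0 : 0 < ν) (hν : ν ≤ 2 * |g y i| / Li) :
    ∀ α γ : ℝ, 0 < α → α ≤ ν → 0 < γ →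
      y + (α * Real.sign (g y i)) • EuclideanSpace.single i (1:ℝ) ∈ Box l u →
      f (y + (α * Real.sign (g y i)) • EuclideanSpace.single i (1:ℝ)) > f y - γ * α ^ 2 := by
  intro α γ hα hαν hγ hmem
  set e : EuclideanSpace ℝ (Fin n) := EuclideanSpace.single i (1:ℝ) with he
  set t : ℝ := α * Real.sign (g y i) with htdef
  -- the gradient coordinate is nonzero
  have hg0 : g y i ≠ 0 := by
    intro h
    rw [h] at hν
    simp at hν
    nlinarith
  -- sign properties
  have hsign : Real.sign (g y i) * g y i = |g y i| := by
    rcases lt_trichotomy (g y i) 0 with hlt | heq | hgt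
    · rw [Real.sign_of_neg hlt, abs_of_neg hlt]; ring
    · exact absurd heq hg0
    · rw [Real.sign_of_pos hgt, abs_of_pos hgt]; ring
  have habs_sign : |Real.sign (g y i)| = 1 := by
    rcases lt_trichotomy (g y i) 0 with hlt | heq | hgt
    · rw [Real.sign_of_neg hlt]; norm_num
    · exact absurd heq hg0
    · rw [Real.sign_of_pos hgt]; norm_num
  have habs_t : |t| = α := by
    rw [htdef, abs_mul, habs_sign, mul_one, abs_of_pos hα]
  have ht_sq : t ^ 2 = α ^ 2 := by
    rw [← sq_abs t, habs_t]
  -- coordinates of the shifted points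
  have hcoord : ∀ (τ : ℝ) (j : Fin n),
      (y + τ • e) j = y j + τ * (if j = i then 1 else 0) := by
    intro τ j
    simp [he, EuclideanSpace.single_apply, PiLp.add_apply, PiLp.smul_apply, smul_eq_mul]
  -- membership of intermediate points
  have hmid : ∀ τ ∈ Set.uIcc 0 t, y + τ • e ∈ Box l u := by
    intro τ hτ j
    have hτ1 : min 0 t ≤ τ := hτ.1
    have hτ2 : τ ≤ max 0 t := hτ.2
    rw [hcoord τ j]
    by_cases hji : j = i
    · subst hji
      simp only [if_pos rfl, if_true, mul_one]
      have h1 := hy j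
      have h2 := hmem j
      rw [hcoord t j] at h2
      simp only [if_pos rfl, if_true, mul_one] at h2
      constructor
      · rcases min_cases 0 t with ⟨hm, _⟩ | ⟨hm, _⟩ <;> rw [hm] at hτ1 <;> linarith [h1.1, h2.1]
      · rcases max_cases 0 t with ⟨hm, _⟩ | ⟨hm, _⟩ <;> rw [hm] at hτ2 <;> linarith [h1.2, h2.2]
    · simp only [if_neg hji, mul_zero, add_zero]
      exact hy j
  -- derivative of φ
  have hline : ∀ τ : ℝ, HasDerivAt (fun σ : ℝ => y + σ • e) e τ := by
    intro τ
    have : HasDerivAt (fun σ : ℝ => σ • e) ((1:ℝ) • e) τ :=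
      (hasDerivAt_id τ).smul_const e
    simpa using this.const_add y
  have hderiv : ∀ τ ∈ Set.uIcc 0 t,
      HasDerivAt (fun σ : ℝ => f (y + σ • e)) (g (y + τ • e) i) τ := by
    intro τ hτ
    have hmemτ := hmid τ hτ
    have hf := (hgrad _ hmemτ).hasFDerivAt
    have hc := hf.comp_hasDerivAt τ (hline τ)
    have : (InnerProductSpace.toDual ℝ (EuclideanSpace ℝ (Fin n)) (g (y + τ • e))) e
        = g (y + τ • e) i := by
      rw [InnerProductSpace.toDual_apply_apply, he, EuclideanSpace.inner_single_right]
      simp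
    rwa [this] at hc
  -- Lipschitz bound along the segment
  have hlipb : ∀ τ ∈ Set.uIcc 0 t, |g (y + τ • e) i - g y i| ≤ Li * |τ| := by
    intro τ hτ
    exact hlip y τ hy (hmid τ hτ)
  -- apply the descent bound
  have hkey := descent_aux (fun σ : ℝ => f (y + σ • e)) (fun τ => g (y + τ • e) i)
    t (g y i) Li hLi.le hderiv hlipb
  simp only [zero_smul, add_zero] at hkey
  -- arithmetic
  have htg : g y i * t = α * |g y i| := by
    rw [htdef, ← hsign]; ring
  have hνLi : ν * Li ≤ 2 * |g y i| := by
    rw [le_div_iff₀ hLi] at hν; linarith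
  have h3 : Li * α ≤ 2 * |g y i| := by nlinarith
  have hLα : Li / 2 * α ^ 2 ≤ α * |g y i| := by
    nlinarith [mul_le_mul_of_nonneg_right h3 hα.le]
  rw [htg, ht_sq] at hkey
  nlinarith [mul_pos hγ (pow_pos hα 2)]
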